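/- Let R be a simple left Noetherian ring that is not left Artinian. Then every left R-module of finite length is cyclic, i.e. generated by a single element. -/
import Mathlib

/-- Key lemma: over a simple ring, for every submodule `A` of a finite-length module
and every left ideal `I` which is not Artinian, there exists `a ∈ A` with `I • a = A`. -/
theorem aux_simple_gen {R M : Type*} [Ring R] [IsSimpleRing R]
    [AddCommGroup M] [Module R M] [IsNoetherian R M] [IsArtinian R M]
    (A : Submodule R M) :
    ∀ I : Ideal R, ¬ IsArtinian R I → ∃ a ∈ A, ∀ x ∈ A, ∃ r ∈ I, r • a = x := by
  induction A using IsArtinian.induction with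
  | _ A ih =>
  intro I hI
  by_cases hA : A = ⊥
  · refine ⟨0, A.zero_mem, fun x hx => ⟨0, I.zero_mem, ?_⟩⟩
    subst hA
    rw [Submodule.mem_bot] at hx
    simp [hx]
  -- I is nonzero
  have hIne : ∃ r₀ ∈ I, r₀ ≠ (0 : R) := by
    by_contra h
    push_neg at h
    have hIbot : I = ⊥ := by
      apply le_antisymm
      · intro r hr; exact (Submodule.mem_bot R).2 (h r hr)
      · exact bot_le
    apply hI
    haveI : Subsingleton I := by
      subst hIbot
      constructor
      rintro ⟨a, ha⟩ ⟨b, hb⟩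
      rw [Submodule.mem_bot] at ha hb
      subst ha; subst hb; rfl
    infer_instance
  obtain ⟨r₀, hr₀I, hr₀⟩ := hIne
  -- find a maximal proper submodule A' of A (Noetherian)
  obtain ⟨A', hA'mem, hA'max⟩ :=
    (set_has_maximal_iff_noetherian.2 (inferInstance : IsNoetherian R M))
      {B | B < A} ⟨⊥, bot_lt_iff_ne_bot.2 hA⟩
  have hA'lt : A' < A := hA'mem
  -- simplicity: find v ∈ A and r₁ ∈ I with r₁ • v ∉ A'
  have hfaithful : ∃ v ∈ A, ∃ r₁ ∈ I, r₁ • v ∉ A' := by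
    by_contra h
    push_neg at h
    -- the annihilator of A/A' as a two-sided ideal
    set J : TwoSidedIdeal R := TwoSidedIdeal.mk' {r : R | ∀ v ∈ A, r • v ∈ A'}
      (by intro v hv; simp)
      (by intro x y hx hy v hv; rw [add_smul]; exact A'.add_mem (hx v hv) (hy v hv))
      (by intro x hx v hv; rw [neg_smul]; exact A'.neg_mem (hx v hv))
      (by intro x y hy v hv; rw [mul_smul]; exact A'.smul_mem x (hy v hv))
      (by intro x y hx v hv; rw [mul_smul]; exact hx (y • v) (A.smul_mem y hv))
      with hJ
    have hJne : J ≠ ⊤ := by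
      intro htop
      have h1 : (1 : R) ∈ J := htop ▸ trivial
      rw [hJ, TwoSidedIdeal.mem_mk'] at h1
      have : A ≤ A' := by intro v hv; simpa using h1 v hv
      exact absurd (lt_of_lt_of_le hA'lt this) (lt_irrefl A')
    have hJbot : J = ⊥ := (IsSimpleRing.simple.eq_bot_or_eq_top J).resolve_right hJne
    have hr₀J : r₀ ∈ J := by
      rw [hJ, TwoSidedIdeal.mem_mk']
      intro v hv
      exact h v hv r₀ hr₀I
    rw [hJbot, TwoSidedIdeal.mem_bot] at hr₀J
    exact hr₀ hr₀J
  obtain ⟨v, hvA, r₁, hr₁I, hr₁v⟩ := hfaithful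
  -- K₀ = {r ∈ I : r • v = 0} is not Artinian
  set K₀ : Ideal R := I ⊓ LinearMap.ker (LinearMap.toSpanSingleton R M v) with hK₀def
  have hK₀le : K₀ ≤ I := inf_le_left
  have hK₀ : ¬ IsArtinian R K₀ := by
    intro hart
    apply hI
    refine isArtinian_of_range_eq_ker (Submodule.inclusion hK₀le)
      ((LinearMap.toSpanSingleton R M v).comp (Submodule.subtype I)) ?_
    ext ⟨x, hx⟩
    rw [Submodule.range_inclusion]
    simp [hK₀def, hx]
  obtain ⟨u, huA', hu⟩ := ih A' hA'lt K₀ hK₀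
  -- candidate generator
  refine ⟨u + v, A.add_mem (le_of_lt hA'lt huA') hvA, ?_⟩
  -- N = I • (u + v)
  set a : M := u + v with ha
  set N : Submodule R M := Submodule.map (LinearMap.toSpanSingleton R M a) (I : Submodule R R)
    with hN
  have hmemN : ∀ x, x ∈ N ↔ ∃ r ∈ I, r • a = x := by
    intro x
    simp [hN, LinearMap.toSpanSingleton_apply]
  have hA'N : A' ≤ N := by
    intro x hx
    obtain ⟨k, hkK₀, hk⟩ := hu x hx
    rw [hK₀def] at hkK₀
    obtain ⟨hkI, hkv⟩ := Submodule.mem_inf.1 hkK₀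
    rw [LinearMap.mem_ker, LinearMap.toSpanSingleton_apply] at hkv
    refine (hmemN x).2 ⟨k, hkI, ?_⟩
    rw [ha, smul_add, hkv, add_zero, hk]
  have hNA : N ≤ A := by
    intro x hx
    obtain ⟨r, hrI, hr⟩ := (hmemN x).1 hx
    rw [← hr, ha]
    exact A.smul_mem r (A.add_mem (le_of_lt hA'lt huA') hvA)
  have hr₁vN : r₁ • v ∈ N := by
    have h1 : r₁ • a ∈ N := (hmemN _).2 ⟨r₁, hr₁I, rfl⟩
    have h2 : r₁ • u ∈ N := hA'N (A'.smul_mem r₁ huA')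
    have : r₁ • v = r₁ • a - r₁ • u := by rw [ha, smul_add]; abel
    rw [this]
    exact N.sub_mem h1 h2
  have hNeqA : N = A := by
    by_contra hne
    have hNlt : N < A := lt_of_le_of_ne hNA hne
    have := hA'max N hNlt
    have hA'eqN : A' = N := by
      rcases lt_or_eq_of_le hA'N with h | h
      · exact absurd h this
      · exact h
    rw [← hA'eqN] at hr₁vN
    exact hr₁v hr₁vN
  intro x hx
  exact (hmemN x).1 (hNeqA ▸ hx)

/-- Let `R` be a simple left Noetherian ring that is not left Artinian. Then every
left `R`-module of finite length (equivalently, both Noetherian and Artinian as a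
module) is cyclic, i.e. generated by a single element. -/
theorem stmt_10 (R M : Type*) [Ring R] [IsSimpleRing R]
    [IsNoetherianRing R] (hNotArtinian : ¬ IsArtinianRing R)
    [AddCommGroup M] [Module R M] [IsNoetherian R M] [IsArtinian R M] :
    ∃ m : M, Submodule.span R ({m} : Set M) = ⊤ := by
  have htop : ¬ IsArtinian R (⊤ : Ideal R) := by
    intro h
    exact hNotArtinian (isArtinian_of_linearEquiv (Submodule.topEquiv))
  obtain ⟨a, -, h⟩ := aux_simple_gen (⊤ : Submodule R M) (⊤ : Ideal R) htop
  refine ⟨a, ?_⟩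
  rw [eq_top_iff]
  intro x _
  obtain ⟨r, -, hr⟩ := h x trivial
  exact Submodule.mem_span_singleton.2 ⟨r, hr⟩
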